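/- For a triangle-free (d+1)-regular graph with d ≥ 1, there exist real angles γ, β such that the level-1 QAOA MaxCut expectation value satisfies F(γ,β)/|E| > (1/2)·(1 + 1/(√e·√(d+1))); that is, the optimal level-1 approximation ratio exceeds (1/2)(1 + 1/√(e(d+1))). -/

import Mathlib

/-- For a triangle-free `(d+1)`-regular graph with `d ≥ 1`, there are angles `γ, β` whose
level-1 QAOA MaxCut approximation ratio exceeds `(1/2)(1 + 1/√(e(d+1)))`. -/
theorem qaoa1_approximation_ratio_lower_bound
    (d : ℕ) (hd : 1 ≤ d) (E : ℝ) (hE : 0 < E) (F : ℝ → ℝ → ℝ)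
    (hF : ∀ γ β : ℝ, F γ β = (E / 2) * (1 + Real.sin (4 * β) * Real.sin γ * Real.cos γ ^ d)) :
    ∃ γ β : ℝ, F γ β / E >
      (1 / 2) * (1 + 1 / (Real.sqrt (Real.exp 1) * Real.sqrt (d + 1))) := by
  set n : ℝ := (d : ℝ) with hn
  have hn1 : (1 : ℝ) ≤ n := by rw [hn]; exact_mod_cast hd
  have hn0 : (0 : ℝ) < n := lt_of_lt_of_le one_pos hn1
  have hn1' : (0 : ℝ) < n + 1 := by linarith
  refine ⟨Real.arcsin (1 / Real.sqrt (n + 1)), Real.pi / 8, ?_⟩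
  have hsqrt_pos : 0 < Real.sqrt (n + 1) := Real.sqrt_pos.mpr hn1'
  have hx0 : (0 : ℝ) ≤ 1 / Real.sqrt (n + 1) := by positivity
  have hx1 : 1 / Real.sqrt (n + 1) ≤ 1 := by
    rw [div_le_one hsqrt_pos]
    have : (1 : ℝ) = Real.sqrt 1 := (Real.sqrt_one).symm
    rw [this]
    exact Real.sqrt_le_sqrt (by linarith)
  have hsin : Real.sin (Real.arcsin (1 / Real.sqrt (n + 1))) = 1 / Real.sqrt (n + 1) :=
    Real.sin_arcsin (by linarith) hx1
  have hcos : Real.cos (Real.arcsin (1 / Real.sqrt (n + 1)))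
      = Real.sqrt (n / (n + 1)) := by
    rw [Real.cos_arcsin]
    congr 1
    rw [div_pow, one_pow, Real.sq_sqrt hn1'.le]
    field_simp
    ring
  have hsinb : Real.sin (4 * (Real.pi / 8)) = 1 := by
    norm_num [show 4 * (Real.pi / 8) = Real.pi / 2 by ring]
  -- Key inequality: (n/(n+1))^d > 1/e
  have hkey : 1 / Real.exp 1 < (n / (n + 1)) ^ d := by
    have h1 : (1 + 1 / n) ^ d < Real.exp 1 := by
      have hb : (1 : ℝ) + 1 / n < Real.exp (1 / n) := by
        have := Real.add_one_lt_exp (x := 1 / n) (by positivity)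
        linarith
      calc (1 + 1 / n) ^ d < Real.exp (1 / n) ^ d := by
            apply pow_lt_pow_left₀ hb (by positivity)
            omega
        _ = Real.exp (d * (1 / n)) := (Real.exp_nat_mul _ _).symm
        _ = Real.exp 1 := by
            rw [hn]
            congr 1
            field_simp
    have h2 : (n / (n + 1)) ^ d = 1 / (1 + 1 / n) ^ d := by
      rw [← one_div_pow]
      congr 1
      field_simp
    rw [h2]
    apply one_div_lt_one_div_of_lt
    · positivity
    · exact h1
  -- Hence √(n/(n+1))^d > 1/√e
  have hpow_pos : (0 : ℝ) < Real.sqrt (n / (n + 1)) ^ d := by positivity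
  have hcore : 1 / Real.sqrt (Real.exp 1) < Real.sqrt (n / (n + 1)) ^ d := by
    have ha : (1 / Real.sqrt (Real.exp 1)) ^ 2 = 1 / Real.exp 1 := by
      rw [div_pow, one_pow, Real.sq_sqrt (Real.exp_pos 1).le]
    have hb : (Real.sqrt (n / (n + 1)) ^ d) ^ 2 = (n / (n + 1)) ^ d := by
      rw [← pow_mul, mul_comm d 2, pow_mul, Real.sq_sqrt (by positivity)]
    have h2 : (1 / Real.sqrt (Real.exp 1)) ^ 2 < (Real.sqrt (n / (n + 1)) ^ d) ^ 2 := by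
      rw [ha, hb]; exact hkey
    nlinarith [Real.sqrt_pos.mpr (Real.exp_pos 1), hpow_pos]
  -- Finish
  rw [hF, hsin, hsinb, hcos]
  have hEne : E ≠ 0 := ne_of_gt hE
  rw [gt_iff_lt, show E / 2 * (1 + 1 * (1 / Real.sqrt (n + 1)) * Real.sqrt (n / (n + 1)) ^ d) / E
      = (1 + (1 / Real.sqrt (n + 1)) * Real.sqrt (n / (n + 1)) ^ d) / 2 by
        field_simp]
  have hstep : 1 / (Real.sqrt (Real.exp 1) * Real.sqrt (n + 1))
      < (1 / Real.sqrt (n + 1)) * Real.sqrt (n / (n + 1)) ^ d := by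
    rw [show 1 / (Real.sqrt (Real.exp 1) * Real.sqrt (n + 1))
        = (1 / Real.sqrt (n + 1)) * (1 / Real.sqrt (Real.exp 1)) by
          field_simp]
    exact (mul_lt_mul_iff_right₀ (by positivity)).mpr hcore
  linarith
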